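/- If A is a PK×PK Hermitian positive definite matrix, then for each integer R ≥ K the R×R Toeplitz matrix T^{(P)}_{R,K}(A) is Hermitian positive definite. If A is a K×K Hermitian positive definite matrix and R ≤ K, then T_{R,R}(A) is Hermitian positive definite. -/

import Mathlib

open MeasureTheory ProbabilityTheory Matrix Filter Topology Finset Kronecker
open scoped Matrix.Norms.L2Operator ComplexOrder

noncomputable section

/-- The Marcenko–Pastur distribution with parameters `s = σ²` and `c`. -/
def mpMeasure (s c : ℝ) : Measure ℝ :=
  ENNReal.ofReal (1 - 1/c) • Measure.dirac 0 +
    MeasureTheory.volume.withDensity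
      (Set.indicator (Set.Icc (s*(1-Real.sqrt c)^2) (s*(1+Real.sqrt c)^2))
        (fun x => ENNReal.ofReal
          (Real.sqrt ((s*(1+Real.sqrt c)^2 - x) * (x - s*(1-Real.sqrt c)^2)) /
            (2*Real.pi*s*c*x))))

/-- Stieltjes transform of the Marcenko–Pastur distribution. -/
def stT (s c : ℝ) (z : ℂ) : ℂ := ∫ x, ((x:ℂ) - z)⁻¹ ∂(mpMeasure s c)

def stTilde (s c : ℝ) (z : ℂ) : ℂ := -1 / (z * (1 + (s : ℂ) * (c : ℂ) * stT s c z))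

def mpS0 (s c : ℝ) : Set ℝ := Set.Icc (s*(1-Real.sqrt c)^2) (s*(1+Real.sqrt c)^2)

def mpSupp (s c : ℝ) : Set ℝ := if 1 < c then mpS0 s c ∪ {0} else mpS0 s c

/-- The `ML × N` block-Hankel matrix built from the scalars `w`. -/
def hankelW (L N : ℕ) {M : ℕ} (w : Fin M → Fin (N + L - 1) → ℂ) :
    Matrix (Fin M × Fin L) (Fin N) ℂ :=
  Matrix.of fun p j => w p.1 ⟨p.2.1 + j.1, by
    have h1 := p.2.isLt; have h2 := j.isLt; omega⟩

/-- `X ↦ (re X, im X)` indexed by a boolean. -/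
def reim (x : ℂ) : Bool → ℝ := fun b => if b then x.re else x.im

/-- The family `(w i)` is i.i.d. complex Gaussian with independent real and imaginary
parts, each `N(0, σ²/(2N))`. -/
def IsGaussianFamily {Ω : Type*} [MeasurableSpace Ω] (μ : Measure Ω)
    (σ : ℝ) (N : ℕ) {ι : Type*} (w : ι → Ω → ℂ) : Prop :=
  iIndepFun
      (fun p : ι × Bool => fun ω => reim (w p.1 ω) p.2) μ ∧
  ∀ p : ι × Bool,
    Measure.map (fun ω => reim (w p.1 ω) p.2) μ =
      gaussianReal 0 (Real.toNNReal (σ^2 / (2*N)))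

/-- Resolvent `(A - z I)⁻¹`. -/
def resolv {n : Type*} [Fintype n] [DecidableEq n] (A : Matrix n n ℂ) (z : ℂ) :
    Matrix n n ℂ := (A - z • 1)⁻¹

/-- eigenvalues of W W^*. -/
def eigenW (L M N : ℕ) (w : Fin M → Fin (N + L - 1) → ℂ) : Fin M × Fin L → ℝ :=
  (Matrix.isHermitian_mul_conjTranspose_self (hankelW L N w)).eigenvalues

/-- `τ^{(P)}(A)(k)`. -/
def tauP (P K : ℕ) (A : Matrix (Fin P × Fin K) (Fin P × Fin K) ℂ) (k : ℤ) : ℂ :=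
  (1 / (P * K : ℂ)) * ∑ p : Fin P, ∑ i : Fin K, ∑ j : Fin K,
    if (i : ℤ) - (j : ℤ) = k then A (p, i) (p, j) else 0

/-- `T^{(P)}_{R,Q}(A)`. -/
def TmatP (P K R Q : ℕ) (A : Matrix (Fin P × Fin K) (Fin P × Fin K) ℂ) :
    Matrix (Fin R) (Fin R) ℂ :=
  Matrix.of fun i j =>
    if |(i : ℤ) - (j : ℤ)| ≤ (Q : ℤ) - 1 then tauP P K A ((i : ℤ) - (j : ℤ)) else 0

/-- `τ(A)(k)` (case `P = 1`). -/
def tau1 (K : ℕ) (A : Matrix (Fin K) (Fin K) ℂ) (k : ℤ) : ℂ :=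
  (1 / (K : ℂ)) * ∑ i : Fin K, ∑ j : Fin K,
    if (i : ℤ) - (j : ℤ) = k then A i j else 0

/-- `T_{R,Q}(A)` (case `P = 1`). -/
def Tmat1 (K R Q : ℕ) (A : Matrix (Fin K) (Fin K) ℂ) : Matrix (Fin R) (Fin R) ℂ :=
  Matrix.of fun i j =>
    if |(i : ℤ) - (j : ℤ)| ≤ (Q : ℤ) - 1 then tau1 K A ((i : ℤ) - (j : ℤ)) else 0

/-- the vector `a_K(ν)`. -/
def aVec (K : ℕ) (ν : ℝ) : Fin K → ℂ :=
  fun k => (1 / Real.sqrt K : ℝ) * Complex.exp (2 * Real.pi * Complex.I * ν * k)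

/-- Euclidean norm of a complex vector. -/
def vNorm {n : Type*} [Fintype n] (a : n → ℂ) : ℝ :=
  Real.sqrt (∑ i, ‖a i‖ ^ 2)

/-- Variance of a complex random variable. -/
def cvar {Ω : Type*} [MeasurableSpace Ω] (μ : Measure Ω) (X : Ω → ℂ) : ℝ :=
  (∫ ω, ‖X ω‖ ^ 2 ∂μ) - ‖∫ ω, X ω ∂μ‖ ^ 2

/-- A nice polynomial: the coefficients up to the degree are positive constants. -/
def NicePoly (P : Polynomial ℝ) : Prop := ∀ n ≤ P.natDegree, 0 < P.coeff n

/-! ### Auxiliary machinery for Statement 4 -/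

/-- zero-extension of a vector on `Fin R` to `ℤ`. -/
def xeF (R : ℕ) (x : Fin R → ℂ) (n : ℤ) : ℂ :=
  if h : 0 ≤ n ∧ n < R then x ⟨n.toNat, by omega⟩ else 0

lemma xeF_coe (R : ℕ) (x : Fin R → ℂ) (i : Fin R) : xeF R x (i : ℤ) = x i := by
  rw [xeF, dif_pos ⟨by omega, by exact_mod_cast i.isLt⟩]
  exact congrArg x (Fin.ext (by simp))

lemma xeF_eq_sum (R : ℕ) (x : Fin R → ℂ) (n : ℤ) :
    xeF R x n = ∑ i : Fin R, if (i : ℤ) = n then x i else 0 := by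
  by_cases h : 0 ≤ n ∧ n < R
  · rw [xeF, dif_pos h,
      Finset.sum_eq_single (⟨n.toNat, by omega⟩ : Fin R)]
    · rw [if_pos (by simp; omega)]
    · intro b _ hb
      rw [if_neg]
      intro hbn
      exact hb (by apply Fin.ext; simp at hbn ⊢; omega)
    · intro h'; exact absurd (Finset.mem_univ _) h'
  · rw [xeF, dif_neg h]
    symm
    apply Finset.sum_eq_zero
    intro i _
    rw [if_neg]
    intro hi
    exact h ⟨by omega, by have := i.isLt; omega⟩

def zvecF (P K R : ℕ) (x : Fin R → ℂ) (t : ℤ) (p : Fin P) : Fin P × Fin K → ℂ :=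
  fun q => if q.1 = p then xeF R x (t + q.2) else 0

lemma sum_swap3 {M : Type*} [AddCommMonoid M] {α β γ : Type*}
    (s : Finset α) (t : Finset β) (u : Finset γ) (f : α → β → γ → M) :
    ∑ a ∈ s, ∑ b ∈ t, ∑ c ∈ u, f a b c = ∑ c ∈ u, ∑ a ∈ s, ∑ b ∈ t, f a b c := by
  calc ∑ a ∈ s, ∑ b ∈ t, ∑ c ∈ u, f a b c = ∑ a ∈ s, ∑ c ∈ u, ∑ b ∈ t, f a b c :=
        Finset.sum_congr rfl fun a _ => Finset.sum_comm
    _ = ∑ c ∈ u, ∑ a ∈ s, ∑ b ∈ t, f a b c := Finset.sum_comm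

lemma quadF (P K R : ℕ) (A : Matrix (Fin P × Fin K) (Fin P × Fin K) ℂ)
    (x : Fin R → ℂ) (t : ℤ) (p : Fin P) :
    dotProduct (star (zvecF P K R x t p)) (A *ᵥ zvecF P K R x t p)
      = ∑ k : Fin K, ∑ l : Fin K,
          star (xeF R x (t + (k : ℤ))) * A (p, k) (p, l) * xeF R x (t + (l : ℤ)) := by
  have inner : ∀ k : Fin K, (∑ q2 : Fin P × Fin K, A (p, k) q2 * zvecF P K R x t p q2)
      = ∑ l : Fin K, A (p, k) (p, l) * xeF R x (t + (l : ℤ)) := by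
    intro k
    rw [Fintype.sum_prod_type,
      Fintype.sum_eq_single p (fun b hb => Finset.sum_eq_zero fun l _ => by
        simp [zvecF, hb])]
    exact Finset.sum_congr rfl fun l _ => by simp [zvecF]
  simp only [dotProduct, mulVec, Pi.star_apply]
  rw [Fintype.sum_prod_type,
    Fintype.sum_eq_single p (fun b hb => Finset.sum_eq_zero fun k _ => by
      simp [zvecF, hb])]
  apply Finset.sum_congr rfl
  intro k _
  rw [inner k]
  simp only [zvecF]
  rw [Finset.mul_sum]
  exact Finset.sum_congr rfl fun l _ => by simp only [if_true]; ring

lemma corrF (R K : ℕ) (x : Fin R → ℂ) (k l : Fin K) :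
    ∑ t ∈ Finset.Icc (-(K : ℤ) + 1) ((R : ℤ) - 1),
        star (xeF R x (t + (k : ℤ))) * xeF R x (t + (l : ℤ))
      = ∑ i : Fin R, ∑ j : Fin R,
          if (i : ℤ) - (j : ℤ) = (k : ℤ) - (l : ℤ) then star (x i) * x j else 0 := by
  have rhs : ∀ i : Fin R, (∑ j : Fin R,
      if (i : ℤ) - (j : ℤ) = (k : ℤ) - (l : ℤ) then star (x i) * x j else 0)
      = star (x i) * xeF R x ((i : ℤ) - (k : ℤ) + (l : ℤ)) := by
    intro i
    rw [xeF_eq_sum, Finset.mul_sum]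
    apply Finset.sum_congr rfl
    intro j _
    rw [mul_ite, mul_zero]
    exact if_congr (by omega) rfl rfl
  calc ∑ t ∈ Finset.Icc (-(K : ℤ) + 1) ((R : ℤ) - 1),
        star (xeF R x (t + (k : ℤ))) * xeF R x (t + (l : ℤ))
      = ∑ t ∈ Finset.Icc (-(K : ℤ) + 1) ((R : ℤ) - 1), ∑ i : Fin R,
          (if (i : ℤ) = t + (k : ℤ) then star (x i) else 0) * xeF R x (t + (l : ℤ)) := by
        apply Finset.sum_congr rfl
        intro t _
        rw [xeF_eq_sum R x (t + (k : ℤ)), star_sum, Finset.sum_mul]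
        apply Finset.sum_congr rfl
        intro i _
        split <;> simp
    _ = ∑ i : Fin R, ∑ t ∈ Finset.Icc (-(K : ℤ) + 1) ((R : ℤ) - 1),
          (if (i : ℤ) = t + (k : ℤ) then star (x i) else 0) * xeF R x (t + (l : ℤ)) :=
        Finset.sum_comm
    _ = ∑ i : Fin R, star (x i) * xeF R x ((i : ℤ) - (k : ℤ) + (l : ℤ)) := by
        apply Finset.sum_congr rfl
        intro i _
        rw [Finset.sum_eq_single_of_mem ((i : ℤ) - (k : ℤ))]
        · rw [if_pos (by omega)]
        · rw [Finset.mem_Icc]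
          have := i.isLt; have := k.isLt
          omega
        · intro t _ ht
          rw [if_neg (fun h => ht (by omega)), zero_mul]
    _ = ∑ i : Fin R, ∑ j : Fin R,
          if (i : ℤ) - (j : ℤ) = (k : ℤ) - (l : ℤ) then star (x i) * x j else 0 :=
        Finset.sum_congr rfl fun i _ => (rhs i).symm

lemma mainId (P K R : ℕ) (A : Matrix (Fin P × Fin K) (Fin P × Fin K) ℂ)
    (x : Fin R → ℂ) :
    ∑ i : Fin R, ∑ j : Fin R, star (x i) * tauP P K A ((i : ℤ) - (j : ℤ)) * x j
      = (1 / (P * K : ℂ)) * ∑ t ∈ Finset.Icc (-(K : ℤ) + 1) ((R : ℤ) - 1), ∑ p : Fin P,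
          dotProduct (star (zvecF P K R x t p)) (A *ᵥ zvecF P K R x t p) := by
  calc ∑ i : Fin R, ∑ j : Fin R, star (x i) * tauP P K A ((i : ℤ) - (j : ℤ)) * x j
      = (1 / (P * K : ℂ)) * ∑ i : Fin R, ∑ j : Fin R, ∑ p : Fin P, ∑ k : Fin K, ∑ l : Fin K,
          (if (k : ℤ) - (l : ℤ) = (i : ℤ) - (j : ℤ)
            then star (x i) * A (p, k) (p, l) * x j else 0) := by
        rw [Finset.mul_sum]
        apply Finset.sum_congr rfl
        intro i _
        rw [Finset.mul_sum]
        apply Finset.sum_congr rfl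
        intro j _
        rw [tauP]
        simp only [Finset.mul_sum, Finset.sum_mul, mul_ite, ite_mul, zero_mul, mul_zero]
        refine Finset.sum_congr rfl fun p _ => Finset.sum_congr rfl fun k _ =>
          Finset.sum_congr rfl fun l _ => ?_
        split_ifs <;> ring
    _ = (1 / (P * K : ℂ)) * ∑ p : Fin P, ∑ k : Fin K, ∑ l : Fin K, ∑ i : Fin R, ∑ j : Fin R,
          (if (k : ℤ) - (l : ℤ) = (i : ℤ) - (j : ℤ)
            then star (x i) * A (p, k) (p, l) * x j else 0) := by
        congr 1
        rw [sum_swap3]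
        apply Finset.sum_congr rfl
        intro p _
        rw [sum_swap3]
        apply Finset.sum_congr rfl
        intro k _
        rw [sum_swap3]
    _ = (1 / (P * K : ℂ)) * ∑ p : Fin P, ∑ k : Fin K, ∑ l : Fin K, A (p, k) (p, l) *
          ∑ t ∈ Finset.Icc (-(K : ℤ) + 1) ((R : ℤ) - 1),
            star (xeF R x (t + (k : ℤ))) * xeF R x (t + (l : ℤ)) := by
        congr 1
        refine Finset.sum_congr rfl fun p _ => Finset.sum_congr rfl fun k _ =>
          Finset.sum_congr rfl fun l _ => ?_
        rw [corrF, Finset.mul_sum]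
        apply Finset.sum_congr rfl
        intro i _
        rw [Finset.mul_sum]
        apply Finset.sum_congr rfl
        intro j _
        rw [mul_ite, mul_zero]
        exact if_congr (by omega) (by ring) rfl
    _ = (1 / (P * K : ℂ)) * ∑ p : Fin P, ∑ k : Fin K, ∑ l : Fin K,
          ∑ t ∈ Finset.Icc (-(K : ℤ) + 1) ((R : ℤ) - 1),
            star (xeF R x (t + (k : ℤ))) * A (p, k) (p, l) * xeF R x (t + (l : ℤ)) := by
        congr 1
        refine Finset.sum_congr rfl fun p _ => Finset.sum_congr rfl fun k _ =>
          Finset.sum_congr rfl fun l _ => ?_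
        rw [Finset.mul_sum]
        exact Finset.sum_congr rfl fun t _ => by ring
    _ = (1 / (P * K : ℂ)) * ∑ t ∈ Finset.Icc (-(K : ℤ) + 1) ((R : ℤ) - 1), ∑ p : Fin P,
          ∑ k : Fin K, ∑ l : Fin K,
            star (xeF R x (t + (k : ℤ))) * A (p, k) (p, l) * xeF R x (t + (l : ℤ)) := by
        congr 1
        calc ∑ p : Fin P, ∑ k : Fin K, ∑ l : Fin K, ∑ t ∈ _, _
            = ∑ p : Fin P, ∑ k : Fin K, ∑ t ∈ Finset.Icc (-(K : ℤ) + 1) ((R : ℤ) - 1),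
                ∑ l : Fin K, star (xeF R x (t + (k : ℤ))) * A (p, k) (p, l) *
                  xeF R x (t + (l : ℤ)) :=
              Finset.sum_congr rfl fun p _ => Finset.sum_congr rfl fun k _ =>
                Finset.sum_comm
          _ = ∑ p : Fin P, ∑ t ∈ Finset.Icc (-(K : ℤ) + 1) ((R : ℤ) - 1), ∑ k : Fin K,
                ∑ l : Fin K, star (xeF R x (t + (k : ℤ))) * A (p, k) (p, l) *
                  xeF R x (t + (l : ℤ)) :=
              Finset.sum_congr rfl fun p _ => Finset.sum_comm
          _ = ∑ t ∈ Finset.Icc (-(K : ℤ) + 1) ((R : ℤ) - 1), ∑ p : Fin P, ∑ k : Fin K,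
                ∑ l : Fin K, star (xeF R x (t + (k : ℤ))) * A (p, k) (p, l) *
                  xeF R x (t + (l : ℤ)) := Finset.sum_comm
    _ = (1 / (P * K : ℂ)) * ∑ t ∈ Finset.Icc (-(K : ℤ) + 1) ((R : ℤ) - 1), ∑ p : Fin P,
          dotProduct (star (zvecF P K R x t p)) (A *ᵥ zvecF P K R x t p) := by
        congr 1
        exact Finset.sum_congr rfl fun t _ => Finset.sum_congr rfl fun p _ =>
          (quadF P K R A x t p).symm

lemma posKey (P K R : ℕ) (hP : 0 < P) (hK : 0 < K)
    (A : Matrix (Fin P × Fin K) (Fin P × Fin K) ℂ) (hA : A.PosDef)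
    (x : Fin R → ℂ) (hx : x ≠ 0) :
    0 < ∑ i : Fin R, ∑ j : Fin R, star (x i) * tauP P K A ((i : ℤ) - (j : ℤ)) * x j := by
  rw [mainId]
  have hc : (0 : ℂ) < 1 / (P * K : ℂ) := by
    have h1 : ((1 / ((P : ℝ) * (K : ℝ)) : ℝ) : ℂ) = 1 / (P * K : ℂ) := by push_cast; ring
    rw [← h1, Complex.zero_lt_real]
    positivity
  apply mul_pos hc
  obtain ⟨i0, hi0⟩ : ∃ i, x i ≠ 0 := by
    by_contra h; push_neg at h; exact hx (funext h)
  apply Finset.sum_pos'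
  · intro t _
    exact Finset.sum_nonneg fun p _ => hA.posSemidef.dotProduct_mulVec_nonneg _
  · refine ⟨(i0 : ℤ), ?_, ?_⟩
    · rw [Finset.mem_Icc]
      have := i0.isLt
      omega
    · apply Finset.sum_pos'
      · intro p _
        exact hA.posSemidef.dotProduct_mulVec_nonneg _
      · refine ⟨⟨0, hP⟩, Finset.mem_univ _, ?_⟩
        apply hA.dotProduct_mulVec_pos
        intro h0
        apply hi0
        have h1 := congrFun h0 (⟨0, hP⟩, ⟨0, hK⟩)
        simpa [zvecF, xeF_coe] using h1

lemma tauP_conj (P K : ℕ) (A : Matrix (Fin P × Fin K) (Fin P × Fin K) ℂ)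
    (hA : A.IsHermitian) (m : ℤ) : star (tauP P K A m) = tauP P K A (-m) := by
  rw [tauP, tauP, star_mul']
  congr 1
  · simp
  · rw [star_sum]
    apply Finset.sum_congr rfl
    intro p _
    calc star (∑ i : Fin K, ∑ j : Fin K,
            if (i : ℤ) - (j : ℤ) = m then A (p, i) (p, j) else 0)
        = ∑ i : Fin K, ∑ j : Fin K,
            (if (i : ℤ) - (j : ℤ) = m then A (p, j) (p, i) else 0) := by
          rw [star_sum]
          refine Finset.sum_congr rfl fun i _ => ?_
          rw [star_sum]
          refine Finset.sum_congr rfl fun j _ => ?_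
          split
          · exact hA.apply (p, j) (p, i)
          · exact star_zero _
      _ = ∑ j : Fin K, ∑ i : Fin K,
            (if (i : ℤ) - (j : ℤ) = m then A (p, j) (p, i) else 0) := Finset.sum_comm
      _ = ∑ i : Fin K, ∑ j : Fin K,
            (if (i : ℤ) - (j : ℤ) = -m then A (p, i) (p, j) else 0) :=
          Finset.sum_congr rfl fun i _ => Finset.sum_congr rfl fun j _ =>
            if_congr (by omega) rfl rfl

lemma TmatP_entry (P K R : ℕ) (A : Matrix (Fin P × Fin K) (Fin P × Fin K) ℂ)
    (i j : Fin R) : TmatP P K R K A i j = tauP P K A ((i : ℤ) - (j : ℤ)) := by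
  rw [TmatP, Matrix.of_apply]
  split
  · rfl
  · rename_i h
    rw [abs_le, not_and_or] at h
    symm
    rw [tauP]
    rw [Finset.sum_eq_zero, mul_zero]
    intro p _
    rw [Finset.sum_eq_zero]
    intro k _
    rw [Finset.sum_eq_zero]
    intro l _
    rw [if_neg]
    intro heq
    have hk := k.isLt
    have hl := l.isLt
    omega

lemma quadForm_eq {R : ℕ} (M : Matrix (Fin R) (Fin R) ℂ) (x : Fin R → ℂ) :
    dotProduct (star x) (M *ᵥ x) = ∑ i : Fin R, ∑ j : Fin R, star (x i) * M i j * x j := by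
  simp only [dotProduct, mulVec, Pi.star_apply, Finset.mul_sum]
  exact Finset.sum_congr rfl fun i _ => Finset.sum_congr rfl fun j _ => by ring

lemma TmatP_herm (P K R Q : ℕ) (A : Matrix (Fin P × Fin K) (Fin P × Fin K) ℂ)
    (hA : A.IsHermitian) : (TmatP P K R Q A).IsHermitian := by
  apply Matrix.IsHermitian.ext
  intro i j
  rw [TmatP, Matrix.of_apply, Matrix.of_apply]
  rw [show |(j : ℤ) - (i : ℤ)| = |(i : ℤ) - (j : ℤ)| from abs_sub_comm _ _]
  split
  · rw [tauP_conj P K A hA]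
    congr 1
    omega
  · exact star_zero _

lemma submatrix_posDef (K : ℕ) (A : Matrix (Fin K) (Fin K) ℂ) (hA : A.PosDef) :
    (A.submatrix (Prod.snd : Fin 1 × Fin K → Fin K) Prod.snd).PosDef := by
  refine Matrix.PosDef.of_dotProduct_mulVec_pos ?_ ?_
  · apply Matrix.IsHermitian.ext
    intro q1 q2
    exact hA.1.apply q1.2 q2.2
  · intro y hy
    have hq : dotProduct (star y) ((A.submatrix Prod.snd Prod.snd) *ᵥ y)
        = dotProduct (star fun k => y (0, k)) (A *ᵥ fun k => y (0, k)) := by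
      simp only [dotProduct, mulVec, Pi.star_apply, Matrix.submatrix_apply]
      rw [Fintype.sum_prod_type, Fin.sum_univ_one]
      apply Finset.sum_congr rfl
      intro k _
      congr 1
      rw [Fintype.sum_prod_type, Fin.sum_univ_one]
    rw [hq]
    apply hA.dotProduct_mulVec_pos
    intro h0
    apply hy
    funext q
    obtain ⟨p, k⟩ := q
    have hp : p = 0 := Subsingleton.elim _ _
    subst hp
    exact congrFun h0 k

lemma tau1_eq (K : ℕ) (A : Matrix (Fin K) (Fin K) ℂ) (m : ℤ) :
    tau1 K A m = tauP 1 K (A.submatrix (Prod.snd : Fin 1 × Fin K → Fin K) Prod.snd) m := by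
  rw [tau1, tauP, Fin.sum_univ_one]
  norm_num

lemma Tmat1_entry (K R : ℕ) (A : Matrix (Fin K) (Fin K) ℂ) (i j : Fin R) :
    Tmat1 K R R A i j = tau1 K A ((i : ℤ) - (j : ℤ)) := by
  rw [Tmat1, Matrix.of_apply, if_pos]
  rw [abs_le]
  have := i.isLt
  have := j.isLt
  omega

/-- The Toeplitzification operators preserve positive definiteness
(Proposition 2.2 of the paper). -/
theorem statement4 :
    (∀ (P K R : ℕ) (A : Matrix (Fin P × Fin K) (Fin P × Fin K) ℂ),
      0 < P → 0 < K → K ≤ R → A.PosDef → (TmatP P K R K A).PosDef) ∧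
    (∀ (K R : ℕ) (A : Matrix (Fin K) (Fin K) ℂ),
      0 < R → R ≤ K → A.PosDef → (Tmat1 K R R A).PosDef) := by
  constructor
  · intro P K R A hP hK _ hA
    refine Matrix.PosDef.of_dotProduct_mulVec_pos (TmatP_herm P K R K A hA.1) ?_
    intro x hx
    rw [quadForm_eq]
    have he : ∀ i j : Fin R, star (x i) * TmatP P K R K A i j * x j
        = star (x i) * tauP P K A ((i : ℤ) - (j : ℤ)) * x j := by
      intro i j
      rw [TmatP_entry]
    rw [Finset.sum_congr rfl fun i _ => Finset.sum_congr rfl fun j _ => he i j]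
    exact posKey P K R hP hK A hA x hx
  · intro K R A hR hRK hA
    have hK : 0 < K := lt_of_lt_of_le hR hRK
    set A' := A.submatrix (Prod.snd : Fin 1 × Fin K → Fin K) Prod.snd with hA'def
    have hA' : A'.PosDef := submatrix_posDef K A hA
    have hherm : (Tmat1 K R R A).IsHermitian := by
      apply Matrix.IsHermitian.ext
      intro i j
      rw [Tmat1_entry, Tmat1_entry, tau1_eq, tau1_eq, tauP_conj 1 K A' hA'.1]
      congr 1
      omega
    refine Matrix.PosDef.of_dotProduct_mulVec_pos hherm ?_
    intro x hx
    rw [quadForm_eq]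
    have he : ∀ i j : Fin R, star (x i) * Tmat1 K R R A i j * x j
        = star (x i) * tauP 1 K A' ((i : ℤ) - (j : ℤ)) * x j := by
      intro i j
      rw [Tmat1_entry, tau1_eq]
    rw [Finset.sum_congr rfl fun i _ => Finset.sum_congr rfl fun j _ => he i j]
    exact posKey 1 K R one_pos hK A' hA' x hx
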